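/- Let d ≥ 1 and let c ∈ ℂ. Let (H_n)_{n∈ℕ} and (G_n)_{n∈ℕ} be sequences of square-integrable functions ℝ^d → ℂ with ∫_{ℝ^d} |H_n|² = ∫_{ℝ^d} |G_n|² = 1 and ∫_{ℝ^d} H_n(k) · conj(G_n(k)) dk = c for all n. Suppose there is a sequence of positive reals b_n → 0 such that ∫_{B(0,b_n)} |H_n(k)|² dk → 1 and ∫_{B(0,b_n)} |G_n(k)|² dk → 1 as n → ∞, where B(x,r) denotes the open Euclidean ball of radius r centred at x. Let f : ℝ^d → ℂ be bounded and continuous. Then for all k₁, k₂ ∈ ℝ^d, the integral ∫_{ℝ^d} H_n(k₁−k') · conj(G_n(k₂−k')) · f(k') dk' converges as n → ∞ to c·f(k₁) if k₁ = k₂, and to 0 if k₁ ≠ k₂. -/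

import Mathlib

open MeasureTheory Filter
open scoped BigOperators

section Aux

lemma taper_cs_L2 {α : Type*} [MeasurableSpace α] {μ : Measure α} {φ ψ : α → ℂ}
    (hφ : MemLp φ 2 μ) (hψ : MemLp ψ 2 μ) :
    ∫ x, ‖φ x‖ * ‖ψ x‖ ∂μ ≤
      Real.sqrt (∫ x, ‖φ x‖ ^ 2 ∂μ) * Real.sqrt (∫ x, ‖ψ x‖ ^ 2 ∂μ) := by
  have h2 : (2:ℝ).HolderConjugate 2 := Real.HolderConjugate.two_two
  have hφ' : MemLp φ (ENNReal.ofReal 2) μ := by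
    simpa [ENNReal.ofReal_ofNat] using hφ
  have hψ' : MemLp ψ (ENNReal.ofReal 2) μ := by
    simpa [ENNReal.ofReal_ofNat] using hψ
  have h := integral_mul_norm_le_Lp_mul_Lq h2 hφ' hψ'
  have hpow : ∀ x : ℝ, x ^ (2:ℝ) = x ^ 2 := fun x => by
    rw [show (2:ℝ) = ((2:ℕ):ℝ) by norm_num, Real.rpow_natCast]
  simp_rw [hpow] at h
  calc ∫ x, ‖φ x‖ * ‖ψ x‖ ∂μ
      ≤ (∫ a, ‖φ a‖ ^ 2 ∂μ) ^ (1/(2:ℝ)) * (∫ a, ‖ψ a‖ ^ 2 ∂μ) ^ (1/(2:ℝ)) := h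
    _ = _ := by rw [← Real.sqrt_eq_rpow, ← Real.sqrt_eq_rpow]

lemma taper_preimage_sub_ball {X : Type*} [SeminormedAddCommGroup X] (a c : X) (r : ℝ) :
    (fun k' => a - k') ⁻¹' Metric.ball c r = Metric.ball (a - c) r := by
  ext k'
  simp only [Set.mem_preimage, Metric.mem_ball, dist_eq_norm]
  have h : a - k' - c = -(k' - (a - c)) := by abel
  rw [h, norm_neg]

end Aux

set_option maxHeartbeats 1600000

/-- Asymptotic unbiasedness of the tapered cross-periodogram (continuous sampling case):
if the transfer functions `H_n`, `G_n` have unit `L²` norm, constant inner product `c`,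
and concentrate on balls of shrinking bandwidth `b_n → 0`, then for bounded continuous `f`,
`∫ H_n(k₁-k') conj(G_n(k₂-k')) f(k') dk' → c f(k₁)` if `k₁ = k₂`, and `→ 0` otherwise. -/
theorem tapered_periodogram_convergence
    (d : ℕ) (hd : 1 ≤ d) (c : ℂ)
    (H G : ℕ → EuclideanSpace ℝ (Fin d) → ℂ)
    (hHmeas : ∀ n, Measurable (H n)) (hGmeas : ∀ n, Measurable (G n))
    (hH2 : ∀ n, ∫ k : EuclideanSpace ℝ (Fin d), ‖H n k‖ ^ 2 = 1)
    (hG2 : ∀ n, ∫ k : EuclideanSpace ℝ (Fin d), ‖G n k‖ ^ 2 = 1)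
    (hHG : ∀ n, ∫ k : EuclideanSpace ℝ (Fin d), H n k * (starRingEnd ℂ) (G n k) = c)
    (b : ℕ → ℝ) (hbpos : ∀ n, 0 < b n)
    (hb0 : Tendsto b atTop (nhds 0))
    (hHconc : Tendsto (fun n =>
      ∫ k in Metric.ball (0 : EuclideanSpace ℝ (Fin d)) (b n), ‖H n k‖ ^ 2)
        atTop (nhds 1))
    (hGconc : Tendsto (fun n =>
      ∫ k in Metric.ball (0 : EuclideanSpace ℝ (Fin d)) (b n), ‖G n k‖ ^ 2)
        atTop (nhds 1))
    (f : EuclideanSpace ℝ (Fin d) → ℂ) (hf : Continuous f)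
    (hfb : ∃ Cf : ℝ, ∀ x, ‖f x‖ ≤ Cf) :
    ∀ k₁ k₂ : EuclideanSpace ℝ (Fin d),
      (k₁ = k₂ →
        Tendsto (fun n => ∫ k' : EuclideanSpace ℝ (Fin d),
            H n (k₁ - k') * (starRingEnd ℂ) (G n (k₂ - k')) * f k')
          atTop (nhds (c * f k₁))) ∧
      (k₁ ≠ k₂ →
        Tendsto (fun n => ∫ k' : EuclideanSpace ℝ (Fin d),
            H n (k₁ - k') * (starRingEnd ℂ) (G n (k₂ - k')) * f k')
          atTop (nhds 0)) := by
  classical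
  obtain ⟨Cf₀, hCf₀⟩ := hfb
  set Cf : ℝ := max Cf₀ 0 with hCfdef
  have hCfnn : 0 ≤ Cf := le_max_right _ _
  have hCf : ∀ x, ‖f x‖ ≤ Cf := fun x => (hCf₀ x).trans (le_max_left _ _)

  -- integrability of squares
  have hH2i : ∀ n, Integrable (fun k : (EuclideanSpace ℝ (Fin d)) => ‖H n k‖ ^ 2) := by
    intro n; by_contra hn
    have h := hH2 n
    rw [integral_undef hn] at h
    exact zero_ne_one h
  have hG2i : ∀ n, Integrable (fun k : (EuclideanSpace ℝ (Fin d)) => ‖G n k‖ ^ 2) := by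
    intro n; by_contra hn
    have h := hG2 n
    rw [integral_undef hn] at h
    exact zero_ne_one h
  have hHL2 : ∀ n, MemLp (H n) 2 (volume : Measure (EuclideanSpace ℝ (Fin d))) := fun n =>
    (memLp_two_iff_integrable_sq_norm (hHmeas n).aestronglyMeasurable).2 (hH2i n)
  have hGL2 : ∀ n, MemLp (G n) 2 (volume : Measure (EuclideanSpace ℝ (Fin d))) := fun n =>
    (memLp_two_iff_integrable_sq_norm (hGmeas n).aestronglyMeasurable).2 (hG2i n)
  -- mass outside the concentration balls
  set outH : ℕ → ℝ := fun n => ∫ k in (Metric.ball (0:(EuclideanSpace ℝ (Fin d))) (b n))ᶜ, ‖H n k‖ ^ 2 with houtH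
  set outG : ℕ → ℝ := fun n => ∫ k in (Metric.ball (0:(EuclideanSpace ℝ (Fin d))) (b n))ᶜ, ‖G n k‖ ^ 2 with houtG
  have houtHeq : ∀ n, outH n = 1 - ∫ k in Metric.ball (0:(EuclideanSpace ℝ (Fin d))) (b n), ‖H n k‖ ^ 2 := by
    intro n
    have h := integral_add_compl (s := Metric.ball (0:EuclideanSpace ℝ (Fin d)) (b n))
      measurableSet_ball (hH2i n)
    rw [hH2 n] at h
    have hre : outH n = ∫ k in (Metric.ball (0:(EuclideanSpace ℝ (Fin d))) (b n))ᶜ, ‖H n k‖ ^ 2 := rfl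
    rw [hre]
    linarith
  have houtGeq : ∀ n, outG n = 1 - ∫ k in Metric.ball (0:(EuclideanSpace ℝ (Fin d))) (b n), ‖G n k‖ ^ 2 := by
    intro n
    have h := integral_add_compl (s := Metric.ball (0:EuclideanSpace ℝ (Fin d)) (b n))
      measurableSet_ball (hG2i n)
    rw [hG2 n] at h
    have hre : outG n = ∫ k in (Metric.ball (0:(EuclideanSpace ℝ (Fin d))) (b n))ᶜ, ‖G n k‖ ^ 2 := rfl
    rw [hre]
    linarith
  have htoutH : Tendsto outH atTop (nhds 0) := by
    have hfun : outH = fun n => 1 - ∫ k in Metric.ball (0:(EuclideanSpace ℝ (Fin d))) (b n), ‖H n k‖ ^ 2 :=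
      funext houtHeq
    rw [hfun]
    have := (tendsto_const_nhds (x := (1:ℝ)) (f := atTop)).sub hHconc
    simpa using this
  have htoutG : Tendsto outG atTop (nhds 0) := by
    have hfun : outG = fun n => 1 - ∫ k in Metric.ball (0:(EuclideanSpace ℝ (Fin d))) (b n), ‖G n k‖ ^ 2 :=
      funext houtGeq
    rw [hfun]
    have := (tendsto_const_nhds (x := (1:ℝ)) (f := atTop)).sub hGconc
    simpa using this
  set sqH : ℕ → ℝ := fun n => Real.sqrt (outH n) with hsqH
  set sqG : ℕ → ℝ := fun n => Real.sqrt (outG n) with hsqG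
  have htsqH : Tendsto sqH atTop (nhds 0) := by
    have := (Real.continuous_sqrt.tendsto' 0 0 Real.sqrt_zero).comp htoutH
    exact this
  have htsqG : Tendsto sqG atTop (nhds 0) := by
    have := (Real.continuous_sqrt.tendsto' 0 0 Real.sqrt_zero).comp htoutG
    exact this
  have hsqHnn : ∀ n, 0 ≤ sqH n := fun n => Real.sqrt_nonneg _
  have hsqGnn : ∀ n, 0 ≤ sqG n := fun n => Real.sqrt_nonneg _
  -- change of variables on sets
  have cov : ∀ (g : (EuclideanSpace ℝ (Fin d)) → ℝ) (a : (EuclideanSpace ℝ (Fin d))) (s : Set (EuclideanSpace ℝ (Fin d))),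
      ∫ x in (fun k' => a - k') ⁻¹' s, g (a - x) = ∫ y in s, g y := fun g a s =>
    (Measure.measurePreserving_sub_left volume a).setIntegral_preimage_emb
      (MeasurableEquiv.subLeft a).measurableEmbedding g s
  intro k₁ k₂
  -- translated functions and their properties
  have hHτL2 : ∀ n, MemLp (fun k' : (EuclideanSpace ℝ (Fin d)) => H n (k₁ - k')) 2 volume := fun n =>
    (hHL2 n).comp_measurePreserving (Measure.measurePreserving_sub_left volume k₁)
  have hGτL2 : ∀ n, MemLp (fun k' : (EuclideanSpace ℝ (Fin d)) => G n (k₂ - k')) 2 volume := fun n =>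
    (hGL2 n).comp_measurePreserving (Measure.measurePreserving_sub_left volume k₂)
  have hGτcL2 : ∀ n, MemLp (fun k' : (EuclideanSpace ℝ (Fin d)) => (starRingEnd ℂ) (G n (k₂ - k'))) 2 volume := by
    intro n
    refine (hGτL2 n).of_le ?_ ?_
    · have h := continuous_star.comp_aestronglyMeasurable (hGτL2 n).aestronglyMeasurable
      simp only [starRingEnd_apply]
      exact h
    · filter_upwards with x
      simp [RCLike.norm_conj]
  -- the product H(k₁-·) conj(G(k₂-·)) is integrable
  have hprodInt : ∀ n, Integrable
      (fun k' : (EuclideanSpace ℝ (Fin d)) => H n (k₁ - k') * (starRingEnd ℂ) (G n (k₂ - k'))) := by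
    intro n
    rw [← memLp_one_iff_integrable]
    have := (MemLp.smul (𝕜 := ℂ) (E := ℂ) (p := 2) (q := 2) (r := 1)
      (hGτcL2 n) (hHτL2 n))
    exact this
  -- the norm product
  set NP : ℕ → (EuclideanSpace ℝ (Fin d)) → ℝ := fun n k' => ‖H n (k₁ - k')‖ * ‖G n (k₂ - k')‖ with hNP
  have hNPnn : ∀ n k', 0 ≤ NP n k' := fun n k' =>
    mul_nonneg (norm_nonneg _) (norm_nonneg _)
  have hNPeq : ∀ n k', ‖H n (k₁ - k') * (starRingEnd ℂ) (G n (k₂ - k'))‖ = NP n k' := by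
    intro n k'
    simp [hNP, norm_mul, RCLike.norm_conj]
  have hNPInt : ∀ n, Integrable (NP n) := by
    intro n
    refine ((hprodInt n).norm).congr ?_
    filter_upwards with x
    exact hNPeq n x
  -- the full integrand is integrable
  have hFInt : ∀ n, Integrable
      (fun k' : (EuclideanSpace ℝ (Fin d)) => H n (k₁ - k') * (starRingEnd ℂ) (G n (k₂ - k')) * f k') := by
    intro n
    have h := (hprodInt n).bdd_mul hf.aestronglyMeasurable (Filter.Eventually.of_forall hCf)
    refine h.congr ?_
    filter_upwards with x
    ring
  -- translation identities
  have hHτsq : ∀ n, ∫ k' : (EuclideanSpace ℝ (Fin d)), ‖H n (k₁ - k')‖ ^ 2 = 1 := fun n =>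
    (integral_sub_left_eq_self (fun u => ‖H n u‖ ^ 2) volume k₁).trans (hH2 n)
  have hGτsq : ∀ n, ∫ k' : (EuclideanSpace ℝ (Fin d)), ‖G n (k₂ - k')‖ ^ 2 = 1 := fun n =>
    (integral_sub_left_eq_self (fun u => ‖G n u‖ ^ 2) volume k₂).trans (hG2 n)
  have hHτsqInt : ∀ n, Integrable (fun k' : (EuclideanSpace ℝ (Fin d)) => ‖H n (k₁ - k')‖ ^ 2) := fun n =>
    (hH2i n).comp_sub_left k₁
  have hGτsqInt : ∀ n, Integrable (fun k' : (EuclideanSpace ℝ (Fin d)) => ‖G n (k₂ - k')‖ ^ 2) := fun n =>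
    (hG2i n).comp_sub_left k₂
  -- set change of variables for H
  have covH : ∀ n (r : ℝ), ∫ k' in (Metric.ball k₁ r)ᶜ, ‖H n (k₁ - k')‖ ^ 2
      = ∫ u in (Metric.ball (0:(EuclideanSpace ℝ (Fin d))) r)ᶜ, ‖H n u‖ ^ 2 := by
    intro n r
    have h := cov (fun u => ‖H n u‖ ^ 2) k₁ ((Metric.ball (0:(EuclideanSpace ℝ (Fin d))) r)ᶜ)
    rwa [Set.preimage_compl, taper_preimage_sub_ball, sub_zero] at h
  -- set change of variables for G, on a ball around k₁
  have covG : ∀ n (r : ℝ), ∫ k' in Metric.ball k₁ r, ‖G n (k₂ - k')‖ ^ 2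
      = ∫ u in Metric.ball (k₂ - k₁) r, ‖G n u‖ ^ 2 := by
    intro n r
    have h := cov (fun u => ‖G n u‖ ^ 2) k₂ (Metric.ball (k₂ - k₁) r)
    rwa [taper_preimage_sub_ball, sub_sub_cancel] at h
  have covGc : ∀ n (r : ℝ), ∫ k' in (Metric.ball k₁ r)ᶜ, ‖G n (k₂ - k')‖ ^ 2
      = ∫ u in (Metric.ball (k₂ - k₁) r)ᶜ, ‖G n u‖ ^ 2 := by
    intro n r
    have h := cov (fun u => ‖G n u‖ ^ 2) k₂ ((Metric.ball (k₂ - k₁) r)ᶜ)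
    rwa [Set.preimage_compl, taper_preimage_sub_ball, sub_sub_cancel] at h
  -- Cauchy–Schwarz on a set, specialized
  have csS : ∀ n (s : Set (EuclideanSpace ℝ (Fin d))), ∫ k' in s, NP n k'
      ≤ Real.sqrt (∫ k' in s, ‖H n (k₁ - k')‖ ^ 2)
        * Real.sqrt (∫ k' in s, ‖G n (k₂ - k')‖ ^ 2) := by
    intro n s
    exact taper_cs_L2 ((hHτL2 n).restrict s) ((hGτL2 n).restrict s)
  -- whole-space Cauchy–Schwarz
  have csTot : ∀ n, ∫ k' : (EuclideanSpace ℝ (Fin d)), NP n k' ≤ 1 := by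
    intro n
    have h := taper_cs_L2 (hHτL2 n) (hGτL2 n)
    rwa [hHτsq n, hGτsq n, Real.sqrt_one, mul_one] at h
  -- set integrals of squares are at most the total mass 1
  have hsetH : ∀ n (s : Set (EuclideanSpace ℝ (Fin d))), ∫ k' in s, ‖H n (k₁ - k')‖ ^ 2 ≤ 1 := by
    intro n s
    rw [← hHτsq n]
    exact setIntegral_le_integral (hHτsqInt n)
      (Filter.Eventually.of_forall fun x => by positivity)
  have hsetG : ∀ n (s : Set (EuclideanSpace ℝ (Fin d))), ∫ k' in s, ‖G n (k₂ - k')‖ ^ 2 ≤ 1 := by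
    intro n s
    rw [← hGτsq n]
    exact setIntegral_le_integral (hGτsqInt n)
      (Filter.Eventually.of_forall fun x => by positivity)
  have hsqsetnn : ∀ (g : ℕ → (EuclideanSpace ℝ (Fin d)) → ℂ) n (a : (EuclideanSpace ℝ (Fin d))) (s : Set (EuclideanSpace ℝ (Fin d))),
      (0:ℝ) ≤ ∫ k' in s, ‖g n (a - k')‖ ^ 2 := fun g n a s =>
    integral_nonneg fun x => by positivity
  constructor
  · -- case k₁ = k₂
    rintro rfl
    -- the constant inner product after translation
    have hc : ∀ n, ∫ k' : (EuclideanSpace ℝ (Fin d)), H n (k₁ - k') * (starRingEnd ℂ) (G n (k₁ - k')) = c := fun n =>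
      (integral_sub_left_eq_self (fun u => H n u * (starRingEnd ℂ) (G n u)) volume k₁).trans
        (hHG n)
    rw [Metric.tendsto_atTop]
    intro ε hε
    have hden : (0:ℝ) < 1 + 2 * Cf := by linarith
    set ε' : ℝ := ε / (2 * (1 + 2 * Cf)) with hε'def
    have hε' : 0 < ε' := by positivity
    obtain ⟨δ, hδpos, hδ⟩ := Metric.continuous_iff.mp hf k₁ ε' hε'
    have hev1 : ∀ᶠ n in atTop, b n < δ := hb0.eventually_lt_const hδpos
    have hev2 : ∀ᶠ n in atTop, sqH n * sqG n < ε' := by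
      have : Tendsto (fun n => sqH n * sqG n) atTop (nhds 0) := by
        simpa using htsqH.mul htsqG
      exact this.eventually_lt_const hε'
    obtain ⟨N, hN⟩ := (hev1.and hev2).exists_forall_of_atTop
    refine ⟨N, fun n hn => ?_⟩
    obtain ⟨hbδ, hprodε⟩ := hN n hn
    -- rewrite the difference
    have hsub : (∫ k' : (EuclideanSpace ℝ (Fin d)), H n (k₁ - k') * (starRingEnd ℂ) (G n (k₁ - k')) * f k')
        - c * f k₁
        = ∫ k' : (EuclideanSpace ℝ (Fin d)), H n (k₁ - k') * (starRingEnd ℂ) (G n (k₁ - k')) * (f k' - f k₁) := by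
      have h1 : c * f k₁
          = ∫ k' : (EuclideanSpace ℝ (Fin d)), H n (k₁ - k') * (starRingEnd ℂ) (G n (k₁ - k')) * f k₁ := by
        rw [integral_mul_const, hc n]
      rw [h1, ← integral_sub (hFInt n) ((hprodInt n).mul_const (f k₁))]
      congr 1
      funext k'
      ring
    have hDint : Integrable
        (fun k' : (EuclideanSpace ℝ (Fin d)) => H n (k₁ - k') * (starRingEnd ℂ) (G n (k₁ - k')) * (f k' - f k₁)) := by
      have := (hFInt n).sub ((hprodInt n).mul_const (f k₁))
      refine this.congr ?_
      filter_upwards with x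
      simp only [Pi.sub_apply]
      ring
    -- bound the norm
    have hnormeq : ∀ k' : (EuclideanSpace ℝ (Fin d)),
        ‖H n (k₁ - k') * (starRingEnd ℂ) (G n (k₁ - k')) * (f k' - f k₁)‖
        = NP n k' * ‖f k' - f k₁‖ := by
      intro k'
      rw [norm_mul, hNPeq n k']
    have hkey : dist (∫ k' : (EuclideanSpace ℝ (Fin d)), H n (k₁ - k') * (starRingEnd ℂ) (G n (k₁ - k')) * f k')
        (c * f k₁) ≤ ε' + 2 * Cf * (sqH n * sqG n) := by
      rw [dist_eq_norm, hsub]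
      have h0 : ‖∫ k' : (EuclideanSpace ℝ (Fin d)), H n (k₁ - k') * (starRingEnd ℂ) (G n (k₁ - k')) * (f k' - f k₁)‖
          ≤ ∫ k' : (EuclideanSpace ℝ (Fin d)), NP n k' * ‖f k' - f k₁‖ := by
        have := norm_integral_le_integral_norm (μ := volume)
          (fun k' : (EuclideanSpace ℝ (Fin d)) => H n (k₁ - k') * (starRingEnd ℂ) (G n (k₁ - k')) * (f k' - f k₁))
        simpa [hnormeq] using this
      have hnfint : Integrable (fun k' : (EuclideanSpace ℝ (Fin d)) => NP n k' * ‖f k' - f k₁‖) := by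
        refine (hDint.norm).congr ?_
        filter_upwards with x
        exact hnormeq x
      set T : Set (EuclideanSpace ℝ (Fin d)) := Metric.ball k₁ δ with hT
      have hTmeas : MeasurableSet T := Metric.isOpen_ball.measurableSet
      have hsplit : ∫ k' : (EuclideanSpace ℝ (Fin d)), NP n k' * ‖f k' - f k₁‖
          = (∫ k' in T, NP n k' * ‖f k' - f k₁‖) + ∫ k' in Tᶜ, NP n k' * ‖f k' - f k₁‖ :=
        (integral_add_compl hTmeas hnfint).symm
      -- inner bound
      have hbT : ∫ k' in T, NP n k' * ‖f k' - f k₁‖ ≤ ε' := by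
        have h1 : ∫ k' in T, NP n k' * ‖f k' - f k₁‖ ≤ ∫ k' in T, NP n k' * ε' := by
          refine setIntegral_mono_on (hnfint.integrableOn)
            (((hNPInt n).mul_const ε').integrableOn) hTmeas ?_
          intro x hx
          have : ‖f x - f k₁‖ ≤ ε' := by
            have := hδ x (by simpa [hT, Metric.mem_ball] using hx)
            rw [dist_eq_norm] at this
            exact this.le
          exact mul_le_mul_of_nonneg_left this (hNPnn n x)
        have h2 : ∫ k' in T, NP n k' * ε' = (∫ k' in T, NP n k') * ε' :=
          integral_mul_const ε' _
        have h3 : ∫ k' in T, NP n k' ≤ ∫ k' : (EuclideanSpace ℝ (Fin d)), NP n k' :=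
          setIntegral_le_integral (hNPInt n)
            (Filter.Eventually.of_forall fun x => hNPnn n x)
        have h4 := csTot n
        calc ∫ k' in T, NP n k' * ‖f k' - f k₁‖ ≤ ∫ k' in T, NP n k' * ε' := h1
          _ = (∫ k' in T, NP n k') * ε' := h2
          _ ≤ 1 * ε' := by
              apply mul_le_mul_of_nonneg_right _ hε'.le
              exact h3.trans h4
          _ = ε' := one_mul _
      -- outer bound
      have hbTc : ∫ k' in Tᶜ, NP n k' * ‖f k' - f k₁‖ ≤ 2 * Cf * (sqH n * sqG n) := by
        have h1 : ∫ k' in Tᶜ, NP n k' * ‖f k' - f k₁‖ ≤ ∫ k' in Tᶜ, NP n k' * (2 * Cf) := by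
          refine setIntegral_mono_on (hnfint.integrableOn)
            (((hNPInt n).mul_const _).integrableOn) hTmeas.compl ?_
          intro x _
          have : ‖f x - f k₁‖ ≤ 2 * Cf := by
            calc ‖f x - f k₁‖ ≤ ‖f x‖ + ‖f k₁‖ := norm_sub_le _ _
              _ ≤ Cf + Cf := add_le_add (hCf x) (hCf k₁)
              _ = 2 * Cf := by ring
          exact mul_le_mul_of_nonneg_left this (hNPnn n x)
        have h2 : ∫ k' in Tᶜ, NP n k' * (2 * Cf) = (∫ k' in Tᶜ, NP n k') * (2 * Cf) :=
          integral_mul_const _ _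
        have h3 : ∫ k' in Tᶜ, NP n k' ≤ sqH n * sqG n := by
          have hcs := csS n Tᶜ
          have hH' : ∫ k' in Tᶜ, ‖H n (k₁ - k')‖ ^ 2 ≤ outH n := by
            rw [covH n δ]
            refine setIntegral_mono_set ((hH2i n).integrableOn)
              (Filter.Eventually.of_forall fun x => by positivity) ?_
            exact HasSubset.Subset.eventuallyLE
              (Set.compl_subset_compl.mpr (Metric.ball_subset_ball hbδ.le))
          have hG' : ∫ k' in Tᶜ, ‖G n (k₁ - k')‖ ^ 2 ≤ outG n := by
            have := covGc n δ
            rw [sub_self] at this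
            rw [this]
            refine setIntegral_mono_set ((hG2i n).integrableOn)
              (Filter.Eventually.of_forall fun x => by positivity) ?_
            exact HasSubset.Subset.eventuallyLE
              (Set.compl_subset_compl.mpr (Metric.ball_subset_ball hbδ.le))
          calc ∫ k' in Tᶜ, NP n k'
              ≤ Real.sqrt (∫ k' in Tᶜ, ‖H n (k₁ - k')‖ ^ 2)
                * Real.sqrt (∫ k' in Tᶜ, ‖G n (k₁ - k')‖ ^ 2) := hcs
            _ ≤ sqH n * sqG n := by
                apply mul_le_mul (Real.sqrt_le_sqrt hH') (Real.sqrt_le_sqrt hG')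
                  (Real.sqrt_nonneg _) (hsqHnn n)
        have hNPTcnn : (0:ℝ) ≤ ∫ k' in Tᶜ, NP n k' :=
          integral_nonneg fun x => hNPnn n x
        calc ∫ k' in Tᶜ, NP n k' * ‖f k' - f k₁‖
            ≤ (∫ k' in Tᶜ, NP n k') * (2 * Cf) := h1.trans (le_of_eq h2)
          _ ≤ (sqH n * sqG n) * (2 * Cf) := by
              exact mul_le_mul_of_nonneg_right h3 (by positivity)
          _ = 2 * Cf * (sqH n * sqG n) := by ring
      calc ‖∫ k' : (EuclideanSpace ℝ (Fin d)), H n (k₁ - k') * (starRingEnd ℂ) (G n (k₁ - k')) * (f k' - f k₁)‖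
          ≤ ∫ k' : (EuclideanSpace ℝ (Fin d)), NP n k' * ‖f k' - f k₁‖ := h0
        _ = _ := hsplit
        _ ≤ ε' + 2 * Cf * (sqH n * sqG n) := add_le_add hbT hbTc
    have : ε' + 2 * Cf * (sqH n * sqG n) < ε := by
      have h1 : 2 * Cf * (sqH n * sqG n) ≤ 2 * Cf * ε' := by
        apply mul_le_mul_of_nonneg_left hprodε.le (by positivity)
      have h2 : ε' * (1 + 2 * Cf) = ε / 2 := by
        rw [hε'def]; field_simp
      nlinarith [hε, hε']
    exact lt_of_le_of_lt hkey this
  · -- case k₁ ≠ k₂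
    intro hne
    set k₀ : (EuclideanSpace ℝ (Fin d)) := k₂ - k₁ with hk₀
    have hk₀ne : k₀ ≠ 0 := sub_ne_zero.mpr (Ne.symm hne)
    have hk₀pos : 0 < ‖k₀‖ := norm_pos_iff.mpr hk₀ne
    apply squeeze_zero_norm'
    · -- eventual bound
      have hev : ∀ᶠ n in atTop, b n < ‖k₀‖ / 2 :=
        hb0.eventually_lt_const (by positivity)
      filter_upwards [hev] with n hbn
      -- pointwise bound on the integrand's norm
      have h0 : ‖∫ k' : (EuclideanSpace ℝ (Fin d)), H n (k₁ - k') * (starRingEnd ℂ) (G n (k₂ - k')) * f k'‖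
          ≤ ∫ k' : (EuclideanSpace ℝ (Fin d)), NP n k' * Cf := by
        have h1 := norm_integral_le_integral_norm (μ := volume)
          (fun k' : (EuclideanSpace ℝ (Fin d)) => H n (k₁ - k') * (starRingEnd ℂ) (G n (k₂ - k')) * f k')
        have h2 : ∫ k' : (EuclideanSpace ℝ (Fin d)), ‖H n (k₁ - k') * (starRingEnd ℂ) (G n (k₂ - k')) * f k'‖
            ≤ ∫ k' : (EuclideanSpace ℝ (Fin d)), NP n k' * Cf := by
          refine integral_mono ((hFInt n).norm) ((hNPInt n).mul_const Cf) ?_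
          intro x
          show ‖H n (k₁ - x) * (starRingEnd ℂ) (G n (k₂ - x)) * f x‖ ≤ NP n x * Cf
          rw [norm_mul, hNPeq n x]
          exact mul_le_mul_of_nonneg_left (hCf x) (hNPnn n x)
        exact h1.trans h2
      have hA : MeasurableSet (Metric.ball k₁ (b n)) := Metric.isOpen_ball.measurableSet
      set A : Set (EuclideanSpace ℝ (Fin d)) := Metric.ball k₁ (b n) with hAdef
      have hsplit : ∫ k' : (EuclideanSpace ℝ (Fin d)), NP n k' = (∫ k' in A, NP n k') + ∫ k' in Aᶜ, NP n k' :=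
        (integral_add_compl hA (hNPInt n)).symm
      -- inner part: G mass is far from 0
      have hinner : ∫ k' in A, NP n k' ≤ sqG n := by
        have hGA : ∫ k' in A, ‖G n (k₂ - k')‖ ^ 2 ≤ outG n := by
          rw [hAdef, covG n (b n)]
          refine setIntegral_mono_set ((hG2i n).integrableOn)
            (Filter.Eventually.of_forall fun x => by positivity) ?_
          refine HasSubset.Subset.eventuallyLE ?_
          intro x hx
          rw [Metric.mem_ball, dist_eq_norm] at hx
          rw [Set.mem_compl_iff, Metric.mem_ball, dist_zero_right, not_lt]
          have h2 : ‖k₀‖ - ‖x - k₀‖ ≤ ‖x‖ := by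
            have h3 := norm_sub_norm_le k₀ (k₀ - x)
            simp only [sub_sub_cancel] at h3
            calc ‖k₀‖ - ‖x - k₀‖ = ‖k₀‖ - ‖k₀ - x‖ := by rw [norm_sub_rev x k₀]
              _ ≤ ‖x‖ := h3
          linarith [hbn, hx, h2]
        calc ∫ k' in A, NP n k'
            ≤ Real.sqrt (∫ k' in A, ‖H n (k₁ - k')‖ ^ 2)
              * Real.sqrt (∫ k' in A, ‖G n (k₂ - k')‖ ^ 2) := csS n A
          _ ≤ 1 * sqG n := by
              apply mul_le_mul _ (Real.sqrt_le_sqrt hGA) (Real.sqrt_nonneg _) zero_le_one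
              calc Real.sqrt (∫ k' in A, ‖H n (k₁ - k')‖ ^ 2)
                  ≤ Real.sqrt 1 := Real.sqrt_le_sqrt (hsetH n A)
                _ = 1 := Real.sqrt_one
          _ = sqG n := one_mul _
      -- outer part: H mass is far from 0
      have houter : ∫ k' in Aᶜ, NP n k' ≤ sqH n := by
        have hHA : ∫ k' in Aᶜ, ‖H n (k₁ - k')‖ ^ 2 = outH n := by
          rw [hAdef, covH n (b n)]
        calc ∫ k' in Aᶜ, NP n k'
            ≤ Real.sqrt (∫ k' in Aᶜ, ‖H n (k₁ - k')‖ ^ 2)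
              * Real.sqrt (∫ k' in Aᶜ, ‖G n (k₂ - k')‖ ^ 2) := csS n Aᶜ
          _ ≤ sqH n * 1 := by
              apply mul_le_mul (le_of_eq (by rw [hHA])) _ (Real.sqrt_nonneg _) (hsqHnn n)
              calc Real.sqrt (∫ k' in Aᶜ, ‖G n (k₂ - k')‖ ^ 2)
                  ≤ Real.sqrt 1 := Real.sqrt_le_sqrt (hsetG n Aᶜ)
                _ = 1 := Real.sqrt_one
          _ = sqH n := mul_one _
      have hNPtot : ∫ k' : (EuclideanSpace ℝ (Fin d)), NP n k' ≤ sqG n + sqH n := by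
        rw [hsplit]; exact add_le_add hinner houter
      calc ‖∫ k' : (EuclideanSpace ℝ (Fin d)), H n (k₁ - k') * (starRingEnd ℂ) (G n (k₂ - k')) * f k'‖
          ≤ ∫ k' : (EuclideanSpace ℝ (Fin d)), NP n k' * Cf := h0
        _ = (∫ k' : (EuclideanSpace ℝ (Fin d)), NP n k') * Cf := integral_mul_const _ _
        _ ≤ (sqG n + sqH n) * Cf := by
            apply mul_le_mul_of_nonneg_right hNPtot hCfnn
    · have : Tendsto (fun n => (sqG n + sqH n) * Cf) atTop (nhds 0) := by
        have := (htsqG.add htsqH).mul_const Cf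
        simpa using this
      exact this
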